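/- Let r: ℝ^m → ℝ ∪ {∞} be proper lsc convex with x̄ ∈ dom r, ū ∈ ∂r(x̄), σ > 0. Then for any v, d ∈ ℝ^m: v ∈ D*Prox_{σ r*}(ū + σx̄)(d) (limiting coderivative of the prox of the conjugate at ū + σx̄, noting Prox_{σr*}(ū+σx̄) = ū) if and only if v − d ∈ D*Prox_r(x̄+ū)(−d − (σ−1)v). -/

import Mathlib

open Filter

noncomputable section

/-- Bouligand tangent cone to a set `C` at a point `x`. -/
def tangentConeB {X : Type*} [NormedAddCommGroup X] [NormedSpace ℝ X]
    (C : Set X) (x : X) : Set X :=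
  {w | ∃ t : ℕ → ℝ, ∃ c : ℕ → X, (∀ k, 0 < t k) ∧ Tendsto t atTop (nhds 0) ∧
    (∀ k, c k ∈ C) ∧ Tendsto (fun k => (t k)⁻¹ • (c k - x)) atTop (nhds w)}

variable {E F : Type*} [NormedAddCommGroup E] [InnerProductSpace ℝ E]
  [NormedAddCommGroup F] [InnerProductSpace ℝ F]

/-- Regular (Fréchet) normal cone: the polar of the tangent cone. -/
def regNormalP (C : Set (E × F)) (p : E × F) : Set (E × F) :=
  {q | ∀ w ∈ tangentConeB C p, (inner ℝ q.1 w.1 : ℝ) + (inner ℝ q.2 w.2 : ℝ) ≤ 0}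

/-- Limiting (Mordukhovich) normal cone: outer limit of regular normal cones. -/
def limNormalP (C : Set (E × F)) (p : E × F) : Set (E × F) :=
  {q | ∃ pk qk : ℕ → E × F, (∀ k, pk k ∈ C) ∧ Tendsto pk atTop (nhds p) ∧
    (∀ k, qk k ∈ regNormalP C (pk k)) ∧ Tendsto qk atTop (nhds q)}

/-- Limiting coderivative of the mapping whose graph is `G`:
`z ∈ D*(x,u)(w) ⟺ (z, −w) ∈ N_G(x,u)`. -/
def coderivG (G : Set (E × F)) (p : E × F) (w : F) : Set E :=
  {z | (z, -w) ∈ limNormalP G p}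

/-- Convex subdifferential of an extended-real-valued function. -/
def subdiffFn {m : ℕ} (r : EuclideanSpace ℝ (Fin m) → EReal)
    (x : EuclideanSpace ℝ (Fin m)) : Set (EuclideanSpace ℝ (Fin m)) :=
  {u | ∀ y, r x + (((inner ℝ u (y - x) : ℝ)) : EReal) ≤ r y}

/-- Fenchel conjugate of an extended-real-valued function. -/
def fenchelConj {m : ℕ} (r : EuclideanSpace ℝ (Fin m) → EReal)
    (u : EuclideanSpace ℝ (Fin m)) : EReal :=
  ⨆ x, (((inner ℝ u x : ℝ) : EReal) - r x)

lemma tangent_image {X Y : Type*} [NormedAddCommGroup X] [NormedSpace ℝ X]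
    [NormedAddCommGroup Y] [NormedSpace ℝ Y] (B : X ≃L[ℝ] Y) {C : Set X} {x : X}
    {w : X} (hw : w ∈ tangentConeB C x) : B w ∈ tangentConeB (B '' C) (B x) := by
  obtain ⟨t, c, ht, ht0, hc, hlim⟩ := hw
  refine ⟨t, fun k => B (c k), ht, ht0, fun k => ⟨c k, hc k, rfl⟩, ?_⟩
  have := (B.continuous.tendsto w).comp hlim
  simpa only [Function.comp_def, map_sub, map_smul] using this

lemma regN_image (B B' : (E × F) ≃L[ℝ] (E × F))
    (hadj : ∀ (q p : E × F), (inner ℝ q.1 (B p).1 : ℝ) + (inner ℝ q.2 (B p).2 : ℝ)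
      = (inner ℝ (B' q).1 p.1 : ℝ) + (inner ℝ (B' q).2 p.2 : ℝ))
    (C : Set (E × F)) (p q : E × F) :
    q ∈ regNormalP (B '' C) (B p) ↔ B' q ∈ regNormalP C p := by
  constructor
  · intro hq w hw
    have := hq (B w) (tangent_image B hw)
    rwa [hadj] at this
  · intro hq w hw
    have hw' : B.symm w ∈ tangentConeB C p := by
      have := tangent_image B.symm hw
      simpa [Set.image_image] using this
    have h1 := hq _ hw'
    have h2 := hadj q (B.symm w)
    simp only [B.apply_symm_apply] at h2
    rw [h2]; exact h1

lemma limN_image_mp (B B' : (E × F) ≃L[ℝ] (E × F))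
    (hadj : ∀ (q p : E × F), (inner ℝ q.1 (B p).1 : ℝ) + (inner ℝ q.2 (B p).2 : ℝ)
      = (inner ℝ (B' q).1 p.1 : ℝ) + (inner ℝ (B' q).2 p.2 : ℝ))
    (C : Set (E × F)) (p q : E × F)
    (hq : q ∈ limNormalP (B '' C) (B p)) : B' q ∈ limNormalP C p := by
  obtain ⟨pk, qk, hpk, hpl, hqk, hql⟩ := hq
  refine ⟨fun k => B.symm (pk k), fun k => B' (qk k), fun k => ?_, ?_, fun k => ?_, ?_⟩
  · obtain ⟨c, hc, hce⟩ := hpk k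
    simpa [← hce] using hc
  · have := (B.symm.continuous.tendsto _).comp hpl
    simpa [Function.comp_def] using this
  · refine (regN_image B B' hadj C (B.symm (pk k)) (qk k)).mp ?_
    rw [B.apply_symm_apply]; exact hqk k
  · exact (B'.continuous.tendsto _).comp hql

lemma limN_image (B B' : (E × F) ≃L[ℝ] (E × F))
    (hadj : ∀ (q p : E × F), (inner ℝ q.1 (B p).1 : ℝ) + (inner ℝ q.2 (B p).2 : ℝ)
      = (inner ℝ (B' q).1 p.1 : ℝ) + (inner ℝ (B' q).2 p.2 : ℝ))
    (C : Set (E × F)) (p q : E × F) :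
    q ∈ limNormalP (B '' C) (B p) ↔ B' q ∈ limNormalP C p := by
  constructor
  · exact limN_image_mp B B' hadj C p q
  · intro h
    have hadj' : ∀ (q p : E × F), (inner ℝ q.1 (B.symm p).1 : ℝ) + (inner ℝ q.2 (B.symm p).2 : ℝ)
        = (inner ℝ (B'.symm q).1 p.1 : ℝ) + (inner ℝ (B'.symm q).2 p.2 : ℝ) := by
      intro q p
      have := hadj (B'.symm q) (B.symm p)
      simp only [B.apply_symm_apply, B'.apply_symm_apply] at this
      exact this.symm
    have h2 := limN_image_mp B.symm B'.symm hadj' (B '' C) (B p) (B' q) ?_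
    · simpa using h2
    · simpa [Set.image_image] using h

variable {m : ℕ} {f : EuclideanSpace ℝ (Fin m) → EReal}

lemma conj_ge (u y : EuclideanSpace ℝ (Fin m)) :
    (((inner ℝ u y : ℝ) : EReal) - f y) ≤ fenchelConj f u :=
  le_iSup (fun x => (((inner ℝ u x : ℝ) : EReal) - f x)) y

lemma subdiff_ne_top (hp : ∃ y, f y ≠ ⊤) {x u : EuclideanSpace ℝ (Fin m)}
    (hu : u ∈ subdiffFn f x) : f x ≠ ⊤ := by
  intro h
  obtain ⟨y, hy⟩ := hp
  have := hu y
  rw [h] at this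
  rw [EReal.top_add_of_ne_bot (by simp)] at this
  exact hy (top_le_iff.1 this)

lemma conj_eq (hbot : ∀ y, f y ≠ ⊥) (hp : ∃ y, f y ≠ ⊤)
    {x u : EuclideanSpace ℝ (Fin m)} (hu : u ∈ subdiffFn f x) :
    fenchelConj f u = (((inner ℝ u x : ℝ) - (f x).toReal : ℝ) : EReal) := by
  have hxt := subdiff_ne_top hp hu
  have hfx : f x = (((f x).toReal : ℝ) : EReal) := (EReal.coe_toReal hxt (hbot x)).symm
  apply le_antisymm
  · apply iSup_le
    intro y
    by_cases hyt : f y = ⊤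
    · rw [hyt]; simp
    · have hfy : f y = (((f y).toReal : ℝ) : EReal) := (EReal.coe_toReal hyt (hbot y)).symm
      have h1 := hu y
      rw [hfx, hfy, ← EReal.coe_add, EReal.coe_le_coe_iff] at h1
      rw [hfy, ← EReal.coe_sub, EReal.coe_le_coe_iff]
      have h2 : (inner ℝ u (y - x) : ℝ) = (inner ℝ u y : ℝ) - (inner ℝ u x : ℝ) := inner_sub_right u y x
      linarith [h1, h2.symm ▸ h1]
  · refine le_trans (le_of_eq ?_) (conj_ge u x)
    rw [hfx, ← EReal.coe_sub, EReal.toReal_coe]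

lemma subdiff_conj_fwd (hbot : ∀ y, f y ≠ ⊥) (hp : ∃ y, f y ≠ ⊤)
    {x u : EuclideanSpace ℝ (Fin m)} (hu : u ∈ subdiffFn f x) :
    x ∈ subdiffFn (fenchelConj f) u := by
  intro u'
  rw [conj_eq hbot hp hu]
  have hfx : f x = (((f x).toReal : ℝ) : EReal) := (EReal.coe_toReal (subdiff_ne_top hp hu) (hbot x)).symm
  calc ((((inner ℝ u x : ℝ) - (f x).toReal : ℝ)) : EReal) + (((inner ℝ x (u' - u) : ℝ)) : EReal)
      = ((((inner ℝ u' x : ℝ) - (f x).toReal : ℝ)) : EReal) := by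
        rw [← EReal.coe_add, EReal.coe_eq_coe_iff]
        have h2 : (inner ℝ x (u' - u) : ℝ) = (inner ℝ x u' : ℝ) - (inner ℝ x u : ℝ) := inner_sub_right x u' u
        rw [h2, real_inner_comm x u', real_inner_comm x u]
        ring
    _ = (((inner ℝ u' x : ℝ)) : EReal) - f x := by rw [hfx, ← EReal.coe_sub, EReal.toReal_coe]
    _ ≤ fenchelConj f u' := conj_ge u' x

lemma conj_ne_bot (hbot : ∀ y, f y ≠ ⊥) (hp : ∃ y, f y ≠ ⊤)
    (u : EuclideanSpace ℝ (Fin m)) : fenchelConj f u ≠ ⊥ := by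
  obtain ⟨y, hy⟩ := hp
  have hfy : f y = (((f y).toReal : ℝ) : EReal) := (EReal.coe_toReal hy (hbot y)).symm
  have h1 := conj_ge (f := f) u y
  rw [hfy, ← EReal.coe_sub] at h1
  intro h
  rw [h, le_bot_iff] at h1
  exact EReal.coe_ne_bot _ h1

lemma biconj_le (hbot : ∀ y, f y ≠ ⊥) (y : EuclideanSpace ℝ (Fin m)) :
    fenchelConj (fenchelConj f) y ≤ f y := by
  apply iSup_le
  intro u
  by_cases hyt : f y = ⊤
  · exact hyt ▸ le_top
  · have hfy : f y = (((f y).toReal : ℝ) : EReal) := (EReal.coe_toReal hyt (hbot y)).symm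
    have h1 : (((inner ℝ u y : ℝ) - (f y).toReal : ℝ) : EReal) ≤ fenchelConj f u := by
      refine le_trans (le_of_eq ?_) (conj_ge u y)
      rw [hfy, ← EReal.coe_sub, EReal.toReal_coe]
    calc (((inner ℝ y u : ℝ)) : EReal) - fenchelConj f u
        ≤ (((inner ℝ y u : ℝ)) : EReal) - (((inner ℝ u y : ℝ) - (f y).toReal : ℝ) : EReal) :=
          EReal.sub_le_sub le_rfl h1
      _ = f y := by
          rw [← EReal.coe_sub, hfy, EReal.coe_eq_coe_iff, EReal.toReal_coe, real_inner_comm y u]; ring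

lemma sep_lemma (hbot : ∀ x, f x ≠ ⊥) (hp : ∃ x, f x ≠ ⊤)
    (hlsc : LowerSemicontinuous f)
    (hconv : ∀ x y : EuclideanSpace ℝ (Fin m), ∀ a b : ℝ, 0 ≤ a → 0 ≤ b → a + b = 1 →
      f (a • x + b • y) ≤ (a : EReal) * f x + (b : EReal) * f y)
    (x : EuclideanSpace ℝ (Fin m)) (α : ℝ) (hα : (α : EReal) < f x) :
    ∃ (g : EuclideanSpace ℝ (Fin m) →L[ℝ] ℝ) (s c : ℝ), 0 ≤ s ∧ g x + α * s < c ∧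
      ∀ (y : EuclideanSpace ℝ (Fin m)) (t : ℝ), f y ≤ (t : EReal) → c < g y + t * s := by
  set epi : Set (EuclideanSpace ℝ (Fin m) × ℝ) := {p | f p.1 ≤ (p.2 : EReal)} with hepi
  have hconvE : Convex ℝ epi := by
    rintro p hp' q hq' a b ha hb hab
    show f (a • p + b • q).1 ≤ (((a • p + b • q).2 : ℝ) : EReal)
    have h1 : (a • p + b • q).1 = a • p.1 + b • q.1 := rfl
    have h2 : ((a • p + b • q).2 : ℝ) = a * p.2 + b * q.2 := rfl
    rw [h1, h2]
    calc f (a • p.1 + b • q.1) ≤ (a : EReal) * f p.1 + (b : EReal) * f q.1 :=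
          hconv p.1 q.1 a b ha hb hab
      _ ≤ (a : EReal) * ((p.2 : ℝ) : EReal) + (b : EReal) * ((q.2 : ℝ) : EReal) :=
          add_le_add (mul_le_mul_of_nonneg_left hp' (EReal.coe_nonneg.2 ha))
            (mul_le_mul_of_nonneg_left hq' (EReal.coe_nonneg.2 hb))
      _ = ((a * p.2 + b * q.2 : ℝ) : EReal) := by
          rw [← EReal.coe_mul, ← EReal.coe_mul, ← EReal.coe_add]
  have hclosed : IsClosed epi := by
    rw [← isOpen_compl_iff, isOpen_iff_mem_nhds]
    rintro ⟨y, t⟩ hyt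
    have hlt : ((t : ℝ) : EReal) < f y := lt_of_not_ge hyt
    obtain ⟨c, hc1, hc2⟩ := EReal.exists_between_coe_real hlt
    have hU : IsOpen {z : EuclideanSpace ℝ (Fin m) | (c : EReal) < f z} :=
      hlsc.isOpen_preimage c
    have hmem : {z : EuclideanSpace ℝ (Fin m) | (c : EReal) < f z} ×ˢ Set.Iio c ∈ nhds (y, t) :=
      (hU.prod isOpen_Iio).mem_nhds ⟨hc2, EReal.coe_lt_coe_iff.1 hc1⟩
    refine Filter.mem_of_superset hmem ?_
    rintro ⟨z, s⟩ ⟨hz, hs⟩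
    simp only [Set.mem_compl_iff, hepi, Set.mem_setOf_eq, not_le]
    exact lt_trans (EReal.coe_lt_coe_iff.2 hs) hz
  have hxmem : (x, α) ∉ epi := by
    simp only [hepi, Set.mem_setOf_eq, not_le]; exact hα
  obtain ⟨Ff, c, hFx, hFb⟩ := geometric_hahn_banach_point_closed hconvE hclosed hxmem
  set g := Ff.comp (ContinuousLinearMap.inl ℝ (EuclideanSpace ℝ (Fin m)) ℝ) with hg
  set s := Ff (0, 1) with hsdef
  have hsplit : ∀ (y : EuclideanSpace ℝ (Fin m)) (t : ℝ), Ff (y, t) = g y + t * s := by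
    intro y t
    have h1 : (y, t) = (y, (0:ℝ)) + t • ((0 : EuclideanSpace ℝ (Fin m)), (1:ℝ)) := by
      simp [Prod.ext_iff]
    rw [h1, map_add, map_smul, smul_eq_mul]
    rfl
  have hs0 : 0 ≤ s := by
    by_contra hneg
    push_neg at hneg
    obtain ⟨x0, hx0⟩ := hp
    set a0 := (f x0).toReal with ha0
    set t := max a0 ((c - g x0)/s + 1) with ht
    have hmem : (x0, t) ∈ epi := by
      show f x0 ≤ ((t : ℝ) : EReal)
      calc f x0 = ((a0 : ℝ) : EReal) := (EReal.coe_toReal hx0 (hbot x0)).symm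
        _ ≤ ((t : ℝ) : EReal) := EReal.coe_le_coe_iff.2 (le_max_left _ _)
    have h2 := hFb _ hmem
    rw [hsplit] at h2
    have h3 : (c - g x0)/s < t := lt_of_lt_of_le (lt_add_one _) (le_max_right _ _)
    have h4 : t * s < ((c - g x0)/s) * s := mul_lt_mul_of_neg_right h3 hneg
    rw [div_mul_cancel₀ _ (ne_of_lt hneg)] at h4
    linarith
  refine ⟨g, s, c, hs0, ?_, ?_⟩
  · have h5 := hFx; rw [hsplit] at h5; exact h5
  · intro y t hyt
    have h6 := hFb (y, t) hyt
    rwa [hsplit] at h6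

lemma fenchel_moreau (hbot : ∀ x, f x ≠ ⊥) (hp : ∃ x, f x ≠ ⊤)
    (hlsc : LowerSemicontinuous f)
    (hconv : ∀ x y : EuclideanSpace ℝ (Fin m), ∀ a b : ℝ, 0 ≤ a → 0 ≤ b → a + b = 1 →
      f (a • x + b • y) ≤ (a : EReal) * f x + (b : EReal) * f y)
    (x : EuclideanSpace ℝ (Fin m)) : f x ≤ fenchelConj (fenchelConj f) x := by
  by_contra hcon
  push_neg at hcon
  obtain ⟨α, hα1, hα2⟩ := EReal.exists_between_coe_real hcon
  obtain ⟨g, s, c, hs, hlt, hub⟩ := sep_lemma hbot hp hlsc hconv x α hα2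
  set gv := (InnerProductSpace.toDual ℝ (EuclideanSpace ℝ (Fin m))).symm g with hgv
  have hgv' : ∀ y, (inner ℝ gv y : ℝ) = g y := fun y => InnerProductSpace.toDual_symm_apply
  clear_value gv
  have key : ∀ (u0 : EuclideanSpace ℝ (Fin m)) (M : ℝ),
      (∀ (y : EuclideanSpace ℝ (Fin m)) (b : ℝ), f y ≤ (b : EReal) → (inner ℝ u0 y : ℝ) - b ≤ M) →
      (((inner ℝ u0 x : ℝ) - M : ℝ) : EReal) ≤ fenchelConj (fenchelConj f) x := by
    intro u0 M hM
    have hconj : fenchelConj f u0 ≤ (M : EReal) := by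
      apply iSup_le
      intro y
      by_cases hyt : f y = ⊤
      · rw [hyt]; simp
      · have hfy : f y = (((f y).toReal : ℝ) : EReal) := (EReal.coe_toReal hyt (hbot y)).symm
        rw [hfy, ← EReal.coe_sub, EReal.coe_le_coe_iff]
        exact hM y _ (le_of_eq hfy)
    calc (((inner ℝ u0 x : ℝ) - M : ℝ) : EReal)
        = (((inner ℝ u0 x : ℝ)) : EReal) - (M : EReal) := by rw [EReal.coe_sub]
      _ ≤ (((inner ℝ u0 x : ℝ)) : EReal) - fenchelConj f u0 := EReal.sub_le_sub le_rfl hconj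
      _ = (((inner ℝ x u0 : ℝ)) : EReal) - fenchelConj f u0 := by rw [real_inner_comm]
      _ ≤ fenchelConj (fenchelConj f) x :=
          le_iSup (fun u => (((inner ℝ x u : ℝ)) : EReal) - fenchelConj f u) u0
  rcases eq_or_lt_of_le hs with hs0 | hspos
  · -- s = 0 case
    have hgc : ∀ (y : EuclideanSpace ℝ (Fin m)) (b : ℝ), f y ≤ (b : EReal) → c < g y := by
      intro y b hyb
      have h1 := hub y b hyb
      rw [← hs0] at h1
      simpa using h1
    have hgx : g x < c := by
      have h1 := hlt
      rw [← hs0] at h1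
      simpa using h1
    obtain ⟨x0, hx0⟩ := id hp
    have hα0 : (((f x0).toReal - 1 : ℝ) : EReal) < f x0 := by
      conv_rhs => rw [(EReal.coe_toReal hx0 (hbot x0)).symm]
      exact EReal.coe_lt_coe_iff.2 (by linarith)
    obtain ⟨g0, s0, c0, hs0', hlt0, hub0⟩ := sep_lemma hbot hp hlsc hconv x0 _ hα0
    have hs0pos : 0 < s0 := by
      rcases eq_or_lt_of_le hs0' with h0 | h0
      · exfalso
        have h1 := hub0 x0 (f x0).toReal (le_of_eq (EReal.coe_toReal hx0 (hbot x0)).symm)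
        rw [← h0] at h1 hlt0
        simp only [mul_zero, add_zero] at h1 hlt0
        linarith
      · exact h0
    have hs0ne : s0 ≠ 0 := ne_of_gt hs0pos
    set gv0 := (InnerProductSpace.toDual ℝ (EuclideanSpace ℝ (Fin m))).symm g0 with hgv0
    have hgv0' : ∀ y, (inner ℝ gv0 y : ℝ) = g0 y := fun y => InnerProductSpace.toDual_symm_apply
    clear_value gv0
    set u1 : EuclideanSpace ℝ (Fin m) := (-s0⁻¹) • gv0 with hu1
    clear_value u1
    set β : ℝ := (-c0) * s0⁻¹ with hβ
    clear_value β
    have hinner1 : ∀ y, (inner ℝ u1 y : ℝ) = -s0⁻¹ * g0 y := by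
      intro y; rw [hu1, real_inner_smul_left, hgv0']
    have hmin : ∀ (y : EuclideanSpace ℝ (Fin m)) (b : ℝ), f y ≤ (b : EReal) →
        (inner ℝ u1 y : ℝ) - b ≤ β := by
      intro y b hyb
      have h1 := hub0 y b hyb
      have h4 := mul_lt_mul_of_pos_right h1 (inv_pos.2 hs0pos)
      rw [add_mul, mul_assoc, mul_inv_cancel₀ hs0ne, mul_one] at h4
      rw [hinner1, hβ]
      linarith
    set lam : ℝ := max 0 ((α - (inner ℝ u1 x : ℝ) + β + 1)/(c - g x)) with hlam
    have hcgx : (0:ℝ) < c - g x := by linarith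
    have hlam0 : (0:ℝ) ≤ lam := le_max_left _ _
    have hlam1 : α - (inner ℝ u1 x : ℝ) + β + 1 ≤ lam * (c - g x) := by
      have hmr := le_max_right 0 ((α - (inner ℝ u1 x : ℝ) + β + 1)/(c - g x))
      calc α - (inner ℝ u1 x : ℝ) + β + 1
          = ((α - (inner ℝ u1 x : ℝ) + β + 1)/(c - g x)) * (c - g x) := by
            field_simp
        _ ≤ lam * (c - g x) := mul_le_mul_of_nonneg_right hmr (le_of_lt hcgx)
    clear_value lam
    set u2 : EuclideanSpace ℝ (Fin m) := u1 - lam • gv with hu2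
    clear_value u2
    have hinner2 : ∀ y, (inner ℝ u2 y : ℝ) = (inner ℝ u1 y : ℝ) - lam * g y := by
      intro y; rw [hu2, inner_sub_left, real_inner_smul_left, hgv']
    have hbound : ∀ (y : EuclideanSpace ℝ (Fin m)) (b : ℝ), f y ≤ (b : EReal) →
        (inner ℝ u2 y : ℝ) - b ≤ β - lam * c := by
      intro y b hyb
      have h1 := hmin y b hyb
      have h2 := hgc y b hyb
      have h5 := mul_le_mul_of_nonneg_left (le_of_lt h2) hlam0
      rw [hinner2]
      linarith
    have hkey := key u2 (β - lam * c) hbound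
    have hval : α < (inner ℝ u2 x : ℝ) - (β - lam * c) := by
      rw [hinner2]
      have h5 := mul_le_mul_of_nonneg_left (le_of_lt hgx) hlam0
      nlinarith
    have hfin : (α : EReal) < fenchelConj (fenchelConj f) x :=
      lt_of_lt_of_le (EReal.coe_lt_coe_iff.2 hval) hkey
    exact absurd (lt_trans hfin hα1) (lt_irrefl _)
  · -- s > 0 case
    have hsne : s ≠ 0 := ne_of_gt hspos
    set u0 : EuclideanSpace ℝ (Fin m) := (-s⁻¹) • gv with hu0
    clear_value u0
    have hinner0 : ∀ y, (inner ℝ u0 y : ℝ) = -s⁻¹ * g y := by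
      intro y; rw [hu0, real_inner_smul_left, hgv']
    have hbound : ∀ (y : EuclideanSpace ℝ (Fin m)) (b : ℝ), f y ≤ (b : EReal) →
        (inner ℝ u0 y : ℝ) - b ≤ (-c) * s⁻¹ := by
      intro y b hyb
      have h1 := hub y b hyb
      have h4 := mul_lt_mul_of_pos_right h1 (inv_pos.2 hspos)
      rw [add_mul, mul_assoc, mul_inv_cancel₀ hsne, mul_one] at h4
      rw [hinner0]
      linarith
    have hkey := key u0 _ hbound
    have hval : α < (inner ℝ u0 x : ℝ) - (-c) * s⁻¹ := by
      have h4 := mul_lt_mul_of_pos_right hlt (inv_pos.2 hspos)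
      rw [add_mul, mul_assoc, mul_inv_cancel₀ hsne, mul_one] at h4
      rw [hinner0]
      linarith
    have hfin : (α : EReal) < fenchelConj (fenchelConj f) x :=
      lt_of_lt_of_le (EReal.coe_lt_coe_iff.2 hval) hkey
    exact absurd (lt_trans hfin hα1) (lt_irrefl _)

lemma subdiff_inversion (hbot : ∀ x, f x ≠ ⊥) (hp : ∃ x, f x ≠ ⊤)
    (hlsc : LowerSemicontinuous f)
    (hconv : ∀ x y : EuclideanSpace ℝ (Fin m), ∀ a b : ℝ, 0 ≤ a → 0 ≤ b → a + b = 1 →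
      f (a • x + b • y) ≤ (a : EReal) * f x + (b : EReal) * f y)
    (x u : EuclideanSpace ℝ (Fin m)) :
    u ∈ subdiffFn f x ↔ x ∈ subdiffFn (fenchelConj f) u := by
  constructor
  · exact subdiff_conj_fwd hbot hp
  · intro hx
    have hcb : ∀ w, fenchelConj f w ≠ ⊥ := conj_ne_bot hbot hp
    have hfm := fenchel_moreau hbot hp hlsc hconv
    have hct : ∃ w, fenchelConj f w ≠ ⊤ := by
      by_contra hh
      push_neg at hh
      obtain ⟨x0, hx0⟩ := hp
      have hb2 : fenchelConj (fenchelConj f) x0 = ⊥ := by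
        apply le_bot_iff.1
        apply iSup_le
        intro w
        rw [hh w]
        simp
      have h3 := hfm x0
      rw [hb2, le_bot_iff] at h3
      exact hbot x0 h3
    have hu2 : u ∈ subdiffFn (fenchelConj (fenchelConj f)) x := subdiff_conj_fwd hcb hct hx
    intro y
    calc f x + (((inner ℝ u (y - x) : ℝ)) : EReal)
        ≤ fenchelConj (fenchelConj f) x + (((inner ℝ u (y - x) : ℝ)) : EReal) :=
          add_le_add_left (hfm x) _
      _ ≤ fenchelConj (fenchelConj f) y := hu2 y
      _ ≤ f y := biconj_le hbot y

noncomputable def proxEquivL (m : ℕ) (σ : ℝ) (hσ : σ ≠ 0) :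
    (EuclideanSpace ℝ (Fin m) × EuclideanSpace ℝ (Fin m)) ≃ₗ[ℝ]
      (EuclideanSpace ℝ (Fin m) × EuclideanSpace ℝ (Fin m)) where
  toFun p := (p.1 + (σ - 1) • p.2, p.1 - p.2)
  invFun q := (q.2 + σ⁻¹ • (q.1 - q.2), σ⁻¹ • (q.1 - q.2))
  map_add' p q := by
    refine Prod.ext ?_ ?_ <;>
      simp only [Prod.fst_add, Prod.snd_add, Prod.mk_add_mk] <;> module
  map_smul' a p := by
    refine Prod.ext ?_ ?_ <;>
      simp only [Prod.smul_fst, Prod.smul_snd, Prod.smul_mk, RingHom.id_apply] <;> module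
  left_inv p := by
    have h1 : (p.1 + (σ - 1) • p.2) - (p.1 - p.2) = σ • p.2 := by module
    have h2 : σ⁻¹ • (σ • p.2) = p.2 := by rw [smul_smul, inv_mul_cancel₀ hσ, one_smul]
    refine Prod.ext ?_ ?_
    · show (p.1 - p.2) + σ⁻¹ • ((p.1 + (σ - 1) • p.2) - (p.1 - p.2)) = p.1
      rw [h1, h2]; abel
    · show σ⁻¹ • ((p.1 + (σ - 1) • p.2) - (p.1 - p.2)) = p.2
      rw [h1, h2]
  right_inv q := by
    have h3 : σ⁻¹ • (q.1 - q.2) + (σ - 1) • (σ⁻¹ • (q.1 - q.2)) = q.1 - q.2 := by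
      rw [smul_smul, ← add_smul]
      have h4 : σ⁻¹ + (σ - 1) * σ⁻¹ = 1 := by field_simp; ring
      rw [h4, one_smul]
    refine Prod.ext ?_ ?_
    · show (q.2 + σ⁻¹ • (q.1 - q.2)) + (σ - 1) • (σ⁻¹ • (q.1 - q.2)) = q.1
      rw [add_assoc, h3]; abel
    · show (q.2 + σ⁻¹ • (q.1 - q.2)) - σ⁻¹ • (q.1 - q.2) = q.2
      abel

noncomputable def proxAdjL (m : ℕ) (σ : ℝ) (hσ : σ ≠ 0) :
    (EuclideanSpace ℝ (Fin m) × EuclideanSpace ℝ (Fin m)) ≃ₗ[ℝ]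
      (EuclideanSpace ℝ (Fin m) × EuclideanSpace ℝ (Fin m)) where
  toFun q := (q.1 + q.2, (σ - 1) • q.1 - q.2)
  invFun p := (σ⁻¹ • (p.1 + p.2), p.1 - σ⁻¹ • (p.1 + p.2))
  map_add' p q := by
    refine Prod.ext ?_ ?_ <;>
      simp only [Prod.fst_add, Prod.snd_add, Prod.mk_add_mk] <;> module
  map_smul' a p := by
    refine Prod.ext ?_ ?_ <;>
      simp only [Prod.smul_fst, Prod.smul_snd, Prod.smul_mk, RingHom.id_apply] <;> module
  left_inv q := by
    have h1 : (q.1 + q.2) + ((σ - 1) • q.1 - q.2) = σ • q.1 := by module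
    have h2 : σ⁻¹ • (σ • q.1) = q.1 := by rw [smul_smul, inv_mul_cancel₀ hσ, one_smul]
    refine Prod.ext ?_ ?_
    · show σ⁻¹ • ((q.1 + q.2) + ((σ - 1) • q.1 - q.2)) = q.1
      rw [h1, h2]
    · show (q.1 + q.2) - σ⁻¹ • ((q.1 + q.2) + ((σ - 1) • q.1 - q.2)) = q.2
      rw [h1, h2]; abel
  right_inv p := by
    have h1 : σ • (σ⁻¹ • (p.1 + p.2)) = p.1 + p.2 := by
      rw [smul_smul, mul_inv_cancel₀ hσ, one_smul]
    refine Prod.ext ?_ ?_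
    · show σ⁻¹ • (p.1 + p.2) + (p.1 - σ⁻¹ • (p.1 + p.2)) = p.1
      abel
    · show (σ - 1) • (σ⁻¹ • (p.1 + p.2)) - (p.1 - σ⁻¹ • (p.1 + p.2)) = p.2
      have h5 : (σ - 1) • (σ⁻¹ • (p.1 + p.2)) = σ • (σ⁻¹ • (p.1 + p.2)) - σ⁻¹ • (p.1 + p.2) := by
        module
      rw [h5, h1]; abel

theorem stmt14 (m : ℕ) (r : EuclideanSpace ℝ (Fin m) → EReal)
    (hproper : (∃ x, r x ≠ ⊤) ∧ ∀ x, r x ≠ ⊥)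
    (hlsc : LowerSemicontinuous r)
    (hconv : ∀ x y : EuclideanSpace ℝ (Fin m), ∀ a b : ℝ, 0 ≤ a → 0 ≤ b → a + b = 1 →
      r (a • x + b • y) ≤ (a : EReal) * r x + (b : EReal) * r y)
    (xb ub : EuclideanSpace ℝ (Fin m)) (hdom : r xb ≠ ⊤) (hub : ub ∈ subdiffFn r xb)
    (σ : ℝ) (hσ : 0 < σ) (v d : EuclideanSpace ℝ (Fin m)) :
    v ∈ coderivG
        {pp : EuclideanSpace ℝ (Fin m) × EuclideanSpace ℝ (Fin m) |
          ∃ w ∈ subdiffFn (fenchelConj r) pp.2, pp.1 - pp.2 = σ • w}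
        (ub + σ • xb, ub) d ↔
      v - d ∈ coderivG
        {pp : EuclideanSpace ℝ (Fin m) × EuclideanSpace ℝ (Fin m) |
          pp.1 - pp.2 ∈ subdiffFn r pp.2}
        (xb + ub, xb) (-d - (σ - 1) • v) := by
  obtain ⟨hp, hbot⟩ := hproper
  have hσ0 : σ ≠ 0 := ne_of_gt hσ
  have hinv : ∀ x u, u ∈ subdiffFn r x ↔ x ∈ subdiffFn (fenchelConj r) u :=
    fun x u => subdiff_inversion hbot hp hlsc hconv x u
  set B := (proxEquivL m σ hσ0).toContinuousLinearEquiv with hBdef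
  set B' := (proxAdjL m σ hσ0).toContinuousLinearEquiv with hB'def
  have hBapp : ∀ p : EuclideanSpace ℝ (Fin m) × EuclideanSpace ℝ (Fin m),
      B p = (p.1 + (σ - 1) • p.2, p.1 - p.2) := fun p => rfl
  have hB'app : ∀ q : EuclideanSpace ℝ (Fin m) × EuclideanSpace ℝ (Fin m),
      B' q = (q.1 + q.2, (σ - 1) • q.1 - q.2) := fun q => rfl
  have hadj : ∀ q p : EuclideanSpace ℝ (Fin m) × EuclideanSpace ℝ (Fin m),
      (inner ℝ q.1 (B p).1 : ℝ) + (inner ℝ q.2 (B p).2 : ℝ)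
        = (inner ℝ (B' q).1 p.1 : ℝ) + (inner ℝ (B' q).2 p.2 : ℝ) := by
    intro q p
    rw [hBapp, hB'app]
    simp only [inner_add_right, inner_sub_right, inner_add_left, inner_sub_left,
      real_inner_smul_left, real_inner_smul_right]
    ring
  have hG : B '' {pp : EuclideanSpace ℝ (Fin m) × EuclideanSpace ℝ (Fin m) |
        pp.1 - pp.2 ∈ subdiffFn r pp.2}
      = {pp : EuclideanSpace ℝ (Fin m) × EuclideanSpace ℝ (Fin m) |
          ∃ w ∈ subdiffFn (fenchelConj r) pp.2, pp.1 - pp.2 = σ • w} := by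
    ext q
    constructor
    · rintro ⟨p, hpmem, rfl⟩
      rw [hBapp]
      refine ⟨p.2, (hinv p.2 (p.1 - p.2)).1 hpmem, ?_⟩
      show (p.1 + (σ - 1) • p.2) - (p.1 - p.2) = σ • p.2
      module
    · rintro ⟨w, hw, hq⟩
      refine ⟨(q.2 + w, w), ?_, ?_⟩
      · show (q.2 + w) - w ∈ subdiffFn r w
        rw [add_sub_cancel_right]
        exact (hinv w q.2).2 hw
      · rw [hBapp]
        have hq1 : q.1 = σ • w + q.2 := sub_eq_iff_eq_add.1 hq
        refine Prod.ext ?_ ?_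
        · show (q.2 + w) + (σ - 1) • w = q.1
          rw [hq1]; module
        · show (q.2 + w) - w = q.2
          rw [add_sub_cancel_right]
  have hpt : B (xb + ub, xb) = (ub + σ • xb, ub) := by
    rw [hBapp]
    refine Prod.ext ?_ ?_
    · show (xb + ub) + (σ - 1) • xb = ub + σ • xb
      module
    · show (xb + ub) - xb = ub
      rw [add_sub_cancel_left]
  simp only [coderivG, Set.mem_setOf_eq]
  rw [← hG, ← hpt, limN_image B B' hadj]
  have hBq : B' (v, -d) = (v - d, -(-d - (σ - 1) • v)) := by
    rw [hB'app]
    refine Prod.ext ?_ ?_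
    · show v + -d = v - d
      rw [sub_eq_add_neg]
    · show (σ - 1) • v - (-d) = -(-d - (σ - 1) • v)
      module
  rw [hBq]
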